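/- Let k and ℓ be integers with 3 ≤ k ≤ ℓ and let H_{k,ℓ} be the graph described in the context. Then every dominating set of H_{k,ℓ} that contains none of the vertices u, v, w has at least k+ℓ−2 vertices. -/
import Mathlib


/-- The three special vertices `u`, `v`, `w`. -/
inductive UVW : Type
  | u | v | w
deriving DecidableEq

/-- Vertices of `H_{k,ℓ}`: triangle vertices `t_{i,j}` as `Sum.inl (i,j)`
(0-indexed, `i : Fin (k+ℓ-2)`, `j : Fin 3`), plus `u`, `v`, `w`. -/
abbrev HklV (k l : ℕ) := (Fin (k + l - 2) × Fin 3) ⊕ UVW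

/-- Edge relation of `H_{k,ℓ}`: triangles on each `t_{i,·}`; the edge `uv`;
`u` adjacent to `t_{i,1}` (0-indexed `j = 0`) for all `i` and to `t_{i,2}`,
`t_{i,3}` for `i ≥ k` (0-indexed `k-1 ≤ i.val`); `v` adjacent to `t_{i,1}`,
`t_{i,2}` for all `i` and to `t_{i,3}` for `i ≥ k`; `w` adjacent to `t_{i,1}`,
`t_{i,2}` for all `i` and to `t_{i,3}` for `i ≤ k-1` (0-indexed
`i.val < k-1`); `w` adjacent to neither `u` nor `v`. -/
def HklRel (k l : ℕ) : HklV k l → HklV k l → Prop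
  | .inl p, .inl q => p.1 = q.1
  | .inr .u, .inl p =>
      p.2.val = 0 ∨ (k - 1 ≤ p.1.val ∧ (p.2.val = 1 ∨ p.2.val = 2))
  | .inr .v, .inl p =>
      p.2.val = 0 ∨ p.2.val = 1 ∨ (k - 1 ≤ p.1.val ∧ p.2.val = 2)
  | .inr .w, .inl p =>
      p.2.val = 0 ∨ p.2.val = 1 ∨ (p.1.val < k - 1 ∧ p.2.val = 2)
  | .inr .u, .inr .v => True
  | _, _ => False

/-- The graph `H_{k,ℓ}`. -/
def Hkl (k l : ℕ) : SimpleGraph (HklV k l) := SimpleGraph.fromRel (HklRel k l)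

/-- `D` is a dominating set of `G`. -/
def IsDomSet {V : Type*} (G : SimpleGraph V) (D : Finset V) : Prop :=
  ∀ v : V, v ∉ D → ∃ d ∈ D, G.Adj v d

/-- Every dominating set of `H_{k,ℓ}` containing none of `u`, `v`, `w` has at
least `k+ℓ-2` vertices. -/
theorem stmt14 (k l : ℕ) (hk : 3 ≤ k) (hkl : k ≤ l)
    (D : Finset (HklV k l)) (hD : IsDomSet (Hkl k l) D)
    (hu : (Sum.inr UVW.u : HklV k l) ∉ D)
    (hv : (Sum.inr UVW.v : HklV k l) ∉ D)
    (hw : (Sum.inr UVW.w : HklV k l) ∉ D) :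
    k + l - 2 ≤ D.card := by
  -- Each triangle contains a vertex of D
  have key : ∀ i : Fin (k + l - 2), ∃ j : Fin 3, (Sum.inl (i, j) : HklV k l) ∈ D := by
    intro i
    by_cases h0 : (Sum.inl (i, (0 : Fin 3)) : HklV k l) ∈ D
    · exact ⟨0, h0⟩
    · obtain ⟨d, hdD, hadj⟩ := hD _ h0
      match d with
      | .inl q =>
          have hrel : q.1 = i := by
            rcases hadj.2 with h | h
            · exact h.symm
            · exact h
          exact ⟨q.2, by rwa [← hrel, Prod.mk.eta]⟩
      | .inr .u => exact absurd hdD hu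
      | .inr .v => exact absurd hdD hv
      | .inr .w => exact absurd hdD hw
  choose f hf using key
  have hinj : Set.InjOn (fun i => (Sum.inl (i, f i) : HklV k l)) ↑(Finset.univ : Finset (Fin (k + l - 2))) := by
    intro a _ b _ hab
    simpa using congrArg (fun x => match x with | Sum.inl p => p.1 | Sum.inr _ => a) hab
  calc k + l - 2 = (Finset.univ : Finset (Fin (k + l - 2))).card := by simp
    _ ≤ D.card := Finset.card_le_card_of_injOn _ (fun i _ => hf i) hinj
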